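/- arXiv:1612.01315 — 2 statements merged into one kernel-verified Lean document; each statement's English description precedes it below -/
import Mathlib

section
/- Let A be a rational map of the Riemann sphere of degree at least two. Then there exists at most one orbifold O on ℂP¹ with Euler characteristic χ(O) = 0 such that A : O → O is a minimal holomorphic map between orbifolds. -/
open Polynomial OnePoint
open scoped Classical

noncomputable section

namespace GenLattes

/-- Composition of rational functions: `rcomp f g = f ∘ g`. -/
def rcomp (f g : RatFunc ℂ) : RatFunc ℂ :=
  Polynomial.aeval g f.num / Polynomial.aeval g f.denom

/-- The degree of a rational function: the maximum of the degrees of its numerator and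
denominator in lowest terms. -/
def rdeg (f : RatFunc ℂ) : ℕ := max f.num.natDegree f.denom.natDegree

/-- Evaluation of a rational function at a finite point, with value in the Riemann
sphere `ℂP¹ = OnePoint ℂ`. -/
def evalF (f : RatFunc ℂ) (z : ℂ) : OnePoint ℂ :=
  if f.denom.eval z = 0 then ∞ else ((f.num.eval z / f.denom.eval z : ℂ) : OnePoint ℂ)

/-- The local degree (local multiplicity) of a rational function at a finite point. -/
def locDegF (f : RatFunc ℂ) (z : ℂ) : ℕ :=
  if f.denom.eval z = 0 then rootMultiplicity z f.denom
  else rootMultiplicity z (f.num - Polynomial.C (f.num.eval z / f.denom.eval z) * f.denom)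

/-- The rational function `f(1/X)`. -/
def flip (f : RatFunc ℂ) : RatFunc ℂ := rcomp f (RatFunc.X)⁻¹

/-- The self-map of the Riemann sphere `ℂP¹ = OnePoint ℂ` induced by a rational function. -/
def evalOP (f : RatFunc ℂ) (x : OnePoint ℂ) : OnePoint ℂ :=
  OnePoint.rec (evalF (flip f) 0) (fun z => evalF f z) x

/-- The local degree `deg_x f` of a rational function at a point of the Riemann sphere. -/
def locDeg (f : RatFunc ℂ) (x : OnePoint ℂ) : ℕ :=
  OnePoint.rec (locDegF (flip f) 0) (fun z => locDegF f z) x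

/-- The iterate `f^{∘l}` of a rational function (with `riter f 0 = X = id`). -/
def riter (f : RatFunc ℂ) : ℕ → RatFunc ℂ
  | 0 => RatFunc.X
  | l + 1 => rcomp f (riter f l)

/-- An orbifold on the Riemann sphere: a ramification function `ν : ℂP¹ → ℕ` with
`ν(z) ≥ 1` everywhere and `ν(z) = 1` outside a finite set. -/
structure Orbifold where
  nu : OnePoint ℂ → ℕ
  one_le : ∀ z, 1 ≤ nu z
  finite : {z : OnePoint ℂ | nu z ≠ 1}.Finite

/-- A good orbifold: it is forbidden to have exactly one point with `ν > 1`, or exactly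
two such points with different values of `ν`. -/
def Orbifold.Good (O : Orbifold) : Prop :=
  (¬ ∃ z, {w : OnePoint ℂ | O.nu w ≠ 1} = {z}) ∧
  (¬ ∃ z₁ z₂, z₁ ≠ z₂ ∧ {w : OnePoint ℂ | O.nu w ≠ 1} = {z₁, z₂} ∧ O.nu z₁ ≠ O.nu z₂)

/-- A nontrivial orbifold (distinct from the non-ramified sphere). -/
def Orbifold.IsNontrivial (O : Orbifold) : Prop := ∃ z, 1 < O.nu z

/-- The relation `O₁ ⪯ O₂`: pointwise divisibility of ramification functions. -/
def Orbifold.Prec (O₁ O₂ : Orbifold) : Prop := ∀ z, O₁.nu z ∣ O₂.nu z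

/-- The signature of an orbifold: the multiset of values of `ν` on `c(O) = {ν > 1}`. -/
def Orbifold.signature (O : Orbifold) : Multiset ℕ := O.finite.toFinset.val.map O.nu

/-- The Euler characteristic `χ(O) = 2 + Σ (1/ν(z) - 1)`. -/
def Orbifold.eulerChar (O : Orbifold) : ℚ :=
  2 + ∑ z ∈ O.finite.toFinset, ((O.nu z : ℚ)⁻¹ - 1)

/-- `A : O₁ → O₂` is a holomorphic map between orbifolds:
`ν₂(A(z)) ∣ ν₁(z)·deg_z A` for all `z`. -/
def IsHolo (A : RatFunc ℂ) (O₁ O₂ : Orbifold) : Prop :=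
  ∀ z, O₂.nu (evalOP A z) ∣ O₁.nu z * locDeg A z

/-- `A : O₁ → O₂` is a minimal holomorphic map between orbifolds:
`ν₂(A(z)) = ν₁(z)·gcd(deg_z A, ν₂(A(z)))` for all `z`. -/
def IsMinHolo (A : RatFunc ℂ) (O₁ O₂ : Orbifold) : Prop :=
  ∀ z, O₂.nu (evalOP A z) = O₁.nu z * Nat.gcd (locDeg A z) (O₂.nu (evalOP A z))

/-- `A : O₁ → O₂` is a covering map between orbifolds:
`ν₂(A(z)) = ν₁(z)·deg_z A` for all `z`. -/
def IsCovering (A : RatFunc ℂ) (O₁ O₂ : Orbifold) : Prop :=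
  ∀ z, O₂.nu (evalOP A z) = O₁.nu z * locDeg A z

/-- `A` and `B` are conjugate by a Möbius transformation: `A = μ ∘ B ∘ μ⁻¹`. -/
def Conjugate (A B : RatFunc ℂ) : Prop :=
  ∃ μ ν : RatFunc ℂ, rcomp μ ν = RatFunc.X ∧ rcomp ν μ = RatFunc.X ∧
    A = rcomp (rcomp μ B) ν

/-- The Chebyshev polynomial `T_d` viewed as a rational function. -/
def chebyRF (d : ℕ) : RatFunc ℂ :=
  algebraMap (Polynomial ℂ) (RatFunc ℂ) (Polynomial.Chebyshev.T ℂ d)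

end GenLattes

namespace GenLattes

lemma exists_rep (a b : ℂ[X]) (hb : b ≠ 0) :
    ∃ k : ℂ[X], k ≠ 0 ∧
      a = (algebraMap ℂ[X] (RatFunc ℂ) a / algebraMap ℂ[X] (RatFunc ℂ) b).num * k ∧
      b = (algebraMap ℂ[X] (RatFunc ℂ) a / algebraMap ℂ[X] (RatFunc ℂ) b).denom * k := by
  set g : RatFunc ℂ := algebraMap ℂ[X] (RatFunc ℂ) a / algebraMap ℂ[X] (RatFunc ℂ) b with hg
  have hbd : algebraMap ℂ[X] (RatFunc ℂ) b ≠ 0 := by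
    simpa using hb
  have key : a * g.denom = b * g.num := by
    have h1 : algebraMap ℂ[X] (RatFunc ℂ) g.num / algebraMap ℂ[X] (RatFunc ℂ) g.denom = g :=
      RatFunc.num_div_denom g
    have hdd : algebraMap ℂ[X] (RatFunc ℂ) g.denom ≠ 0 := by
      simpa using g.denom_ne_zero
    have h1' : algebraMap ℂ[X] (RatFunc ℂ) g.num / algebraMap ℂ[X] (RatFunc ℂ) g.denom
        = algebraMap ℂ[X] (RatFunc ℂ) a / algebraMap ℂ[X] (RatFunc ℂ) b := by
      rw [RatFunc.num_div_denom]
    rw [div_eq_div_iff hdd hbd] at h1'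
    have : algebraMap ℂ[X] (RatFunc ℂ) (a * g.denom) = algebraMap ℂ[X] (RatFunc ℂ) (b * g.num) := by
      rw [map_mul, map_mul]
      linear_combination -h1' 
    exact (IsFractionRing.injective ℂ[X] (RatFunc ℂ)) this
  by_cases hn : g.num = 0
  · have hg0 : g = 0 := RatFunc.num_eq_zero_iff.mp hn
    have ha : a = 0 := by
      have := key
      rw [hn, mul_zero] at this
      exact (mul_eq_zero.mp this).resolve_right g.denom_ne_zero
    refine ⟨b, hb, ?_, ?_⟩
    · simp [ha, hn]
    · simp [hg0, RatFunc.denom_zero]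
  · have hcop := RatFunc.isCoprime_num_denom g
    have hdvd : g.num ∣ a := by
      have : g.num ∣ a * g.denom := ⟨b, by linear_combination key⟩
      exact hcop.dvd_of_dvd_mul_right this
    obtain ⟨k, hk⟩ := hdvd
    have hbk : b = g.denom * k := by
      have : b * g.num = g.denom * k * g.num := by
        rw [← key, hk]; ring
      exact mul_right_cancel₀ hn this
    have hk0 : k ≠ 0 := by
      rintro rfl
      exact hb (by simp [hbk])
    exact ⟨k, hk0, by rw [hk, mul_comm] , by rw [hbk, mul_comm]⟩

lemma rootMultiplicity_add_of_lt {a b : ℂ[X]} {z : ℂ} (ha : a ≠ 0)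
    (h : rootMultiplicity z a < rootMultiplicity z b) :
    rootMultiplicity z (a + b) = rootMultiplicity z a := by
  have hdvd : (X - C z) ^ rootMultiplicity z a ∣ a + b :=
    dvd_add (pow_rootMultiplicity_dvd a z)
      ((pow_dvd_pow _ h.le).trans (pow_rootMultiplicity_dvd b z))
  have hnd : ¬ (X - C z) ^ (rootMultiplicity z a + 1) ∣ a + b := by
    intro hd
    have hb : (X - C z) ^ (rootMultiplicity z a + 1) ∣ b :=
      (pow_dvd_pow _ h).trans (pow_rootMultiplicity_dvd b z)
    have hA : (X - C z) ^ (rootMultiplicity z a + 1) ∣ a := by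
      have := dvd_sub hd hb
      simpa using this
    exact pow_rootMultiplicity_not_dvd ha z hA
  have hab : a + b ≠ 0 := by rintro h0; exact hnd (h0 ▸ dvd_zero _)
  exact le_antisymm ((rootMultiplicity_le_iff hab _ _).mpr hnd)
    ((le_rootMultiplicity_iff hab).mpr hdvd)

lemma rootMultiplicity_mul_right {a k : ℂ[X]} {z : ℂ} (hk : k.eval z ≠ 0) :
    rootMultiplicity z (a * k) = rootMultiplicity z a := by
  by_cases ha : a = 0
  · simp [ha]
  have hk0 : k ≠ 0 := fun h => hk (by simp [h])
  have hzk : rootMultiplicity z k = 0 := rootMultiplicity_eq_zero (fun h => hk h)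
  rw [rootMultiplicity_mul (mul_ne_zero ha hk0), hzk, add_zero]


lemma evalF_div (a b : ℂ[X]) (hb : b ≠ 0) (z : ℂ) (h : a.eval z ≠ 0 ∨ b.eval z ≠ 0) :
    evalF (algebraMap ℂ[X] (RatFunc ℂ) a / algebraMap ℂ[X] (RatFunc ℂ) b) z =
      if b.eval z = 0 then ∞ else ((a.eval z / b.eval z : ℂ) : OnePoint ℂ) := by
  obtain ⟨k, hk0, hak, hbk⟩ := exists_rep a b hb
  set g := algebraMap ℂ[X] (RatFunc ℂ) a / algebraMap ℂ[X] (RatFunc ℂ) b with hg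
  have hkz : k.eval z ≠ 0 := by
    intro hkz
    rcases h with h | h
    · exact h (by rw [hak, eval_mul, hkz, mul_zero])
    · exact h (by rw [hbk, eval_mul, hkz, mul_zero])
  have hbz : b.eval z = 0 ↔ g.denom.eval z = 0 := by
    rw [hbk, eval_mul, mul_eq_zero]
    exact ⟨fun h' => h'.resolve_right hkz, fun h' => Or.inl h'⟩
  rw [evalF]
  by_cases hd : b.eval z = 0
  · rw [if_pos hd, if_pos (hbz.mp hd)]
  · rw [if_neg hd, if_neg (fun hh => hd (hbz.mpr hh))]
    congr 1
    rw [hak, hbk, eval_mul, eval_mul, mul_div_mul_right _ _ hkz]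

lemma locDegF_div (a b : ℂ[X]) (hb : b ≠ 0) (z : ℂ) (h : a.eval z ≠ 0 ∨ b.eval z ≠ 0) :
    locDegF (algebraMap ℂ[X] (RatFunc ℂ) a / algebraMap ℂ[X] (RatFunc ℂ) b) z =
      if b.eval z = 0 then rootMultiplicity z b
      else rootMultiplicity z (a - C (a.eval z / b.eval z) * b) := by
  obtain ⟨k, hk0, hak, hbk⟩ := exists_rep a b hb
  set g := algebraMap ℂ[X] (RatFunc ℂ) a / algebraMap ℂ[X] (RatFunc ℂ) b with hg
  have hkz : k.eval z ≠ 0 := by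
    intro hkz
    rcases h with h | h
    · exact h (by rw [hak, eval_mul, hkz, mul_zero])
    · exact h (by rw [hbk, eval_mul, hkz, mul_zero])
  have hbz : b.eval z = 0 ↔ g.denom.eval z = 0 := by
    rw [hbk, eval_mul, mul_eq_zero]
    exact ⟨fun h' => h'.resolve_right hkz, fun h' => Or.inl h'⟩
  rw [locDegF]
  by_cases hd : b.eval z = 0
  · rw [if_pos hd, if_pos (hbz.mp hd)]
    rw [hbk, rootMultiplicity_mul_right hkz]
  · rw [if_neg hd, if_neg (fun hh => hd (hbz.mpr hh))]
    have hval : a.eval z / b.eval z = g.num.eval z / g.denom.eval z := by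
      rw [hak, hbk, eval_mul, eval_mul, mul_div_mul_right _ _ hkz]
    have key : a - C (a.eval z / b.eval z) * b
        = (g.num - C (g.num.eval z / g.denom.eval z) * g.denom) * k := by
      rw [hval, hak, hbk]; ring
    rw [key, rootMultiplicity_mul_right hkz]

lemma aeval_invX_mul (p : ℂ[X]) (d : ℕ) (hd : p.natDegree ≤ d) :
    (Polynomial.aeval ((RatFunc.X : RatFunc ℂ))⁻¹ p) * (RatFunc.X : RatFunc ℂ) ^ d
      = algebraMap ℂ[X] (RatFunc ℂ) (reflect d p) := by
  conv_lhs => rw [p.as_sum_support]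
  rw [map_sum, Finset.sum_mul]
  have hrefl : reflect d (∑ i ∈ p.support, (monomial i) (p.coeff i))
      = ∑ i ∈ p.support, reflect d ((monomial i) (p.coeff i)) := by
    classical
    induction p.support using Finset.induction with
    | empty => simp
    | insert _ _ hmem ih => rw [Finset.sum_insert hmem, Finset.sum_insert hmem, reflect_add, ih]
  conv_rhs => rw [p.as_sum_support]
  rw [hrefl, map_sum]
  refine Finset.sum_congr rfl (fun n hn => ?_)
  have hnd : n ≤ d := (le_natDegree_of_mem_supp n hn).trans hd
  rw [aeval_monomial, ← C_mul_X_pow_eq_monomial, reflect_C_mul, reflect_monomial,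
    revAt_le hnd, map_mul, map_pow, RatFunc.algebraMap_X]
  have hX : (RatFunc.X : RatFunc ℂ) ≠ 0 := RatFunc.X_ne_zero
  have : ((RatFunc.X : RatFunc ℂ))⁻¹ ^ n * (RatFunc.X : RatFunc ℂ) ^ d
      = (RatFunc.X : RatFunc ℂ) ^ (d - n) := by
    rw [inv_pow, pow_sub₀ _ hX hnd]
    exact mul_comm _ _

  rw [mul_assoc, this]
  congr 1


lemma reflect_sub (N : ℕ) (a b : ℂ[X]) : reflect N (a - b) = reflect N a - reflect N b := by
  ext i
  simp [coeff_reflect, coeff_sub]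

lemma reflect_ne_zero' {r : ℂ[X]} (hr : r ≠ 0) (d : ℕ) : reflect d r ≠ 0 := by
  intro h
  apply hr
  ext i
  have h2 : coeff (reflect d r) (revAt d i) = 0 := by rw [h, coeff_zero]
  rw [coeff_reflect, revAt_invol] at h2
  simp [h2]

lemma rootMultiplicity_zero_reflect {r : ℂ[X]} (hr : r ≠ 0) {d : ℕ} (h : r.natDegree ≤ d) :
    rootMultiplicity 0 (reflect d r) = d - r.natDegree := by
  rw [rootMultiplicity_eq_natTrailingDegree']
  apply le_antisymm
  · apply natTrailingDegree_le_of_ne_zero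
    rw [coeff_reflect, revAt_le (Nat.sub_le _ _), Nat.sub_sub_self h]
    exact leadingCoeff_ne_zero.mpr hr
  · refine le_natTrailingDegree (reflect_ne_zero' hr d) (fun m hm => ?_)
    rw [coeff_reflect, revAt_le (le_trans hm.le (Nat.sub_le _ _))]
    exact coeff_eq_zero_of_natDegree_lt (by omega)

lemma rdeg_ne_zero {f : RatFunc ℂ} (hA : 2 ≤ rdeg f) : f ≠ 0 := by
  rintro rfl
  rw [rdeg, RatFunc.num_zero] at hA
  simp [RatFunc.denom_zero] at hA

lemma num_ne_zero'' {f : RatFunc ℂ} (hA : 2 ≤ rdeg f) : f.num ≠ 0 :=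
  RatFunc.num_ne_zero (rdeg_ne_zero hA)

lemma coeff_top_ne {f : RatFunc ℂ} (hA : 2 ≤ rdeg f) :
    f.num.coeff (rdeg f) ≠ 0 ∨ f.denom.coeff (rdeg f) ≠ 0 := by
  rcases max_cases f.num.natDegree f.denom.natDegree with ⟨h1, h2⟩ | ⟨h1, h2⟩
  · left
    rw [rdeg, h1]
    exact leadingCoeff_ne_zero.mpr (num_ne_zero'' hA)
  · right
    rw [rdeg, h1]
    exact leadingCoeff_ne_zero.mpr f.denom_ne_zero

lemma sub_C_mul_ne_zero {f : RatFunc ℂ} (hA : 2 ≤ rdeg f) (w : ℂ) :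
    f.num - C w * f.denom ≠ 0 := by
  intro h
  have hnum : f.num = C w * f.denom := by linear_combination h
  have hdvd : f.denom ∣ f.num := ⟨C w, by rw [hnum]; ring⟩
  have hunit : IsUnit f.denom :=
    (RatFunc.isCoprime_num_denom f).isUnit_of_dvd' hdvd dvd_rfl
  have hdeg : f.denom.natDegree = 0 := natDegree_eq_zero_of_isUnit hunit
  have hdegn : f.num.natDegree = 0 := by
    rw [hnum]
    apply le_antisymm _ (Nat.zero_le _)
    exact le_trans (natDegree_mul_le) (by simp [hdeg])
  rw [rdeg, hdegn, hdeg] at hA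
  omega

lemma natDegree_sub_C_mul_le (f : RatFunc ℂ) (w : ℂ) :
    (f.num - C w * f.denom).natDegree ≤ rdeg f :=
  le_trans (natDegree_sub_le _ _)
    (max_le (le_max_left _ _) (le_trans (natDegree_C_mul_le _ _) (le_max_right _ _)))

lemma flip_eq {f : RatFunc ℂ} (hf : f ≠ 0) :
    flip f = algebraMap ℂ[X] (RatFunc ℂ) (reflect (rdeg f) f.num)
      / algebraMap ℂ[X] (RatFunc ℂ) (reflect (rdeg f) f.denom) := by
  have hn := aeval_invX_mul f.num (rdeg f) (le_max_left _ _)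
  have hd := aeval_invX_mul f.denom (rdeg f) (le_max_right _ _)
  have hX : (RatFunc.X : RatFunc ℂ) ^ rdeg f ≠ 0 := pow_ne_zero _ RatFunc.X_ne_zero
  rw [flip, rcomp, ← hn, ← hd, mul_div_mul_right _ _ hX]

lemma evalOP_infty {f : RatFunc ℂ} (hA : 2 ≤ rdeg f) :
    evalOP f ∞ = if f.denom.coeff (rdeg f) = 0 then ∞
      else ((f.num.coeff (rdeg f) / f.denom.coeff (rdeg f) : ℂ) : OnePoint ℂ) := by
  have h0 : evalOP f ∞ = evalF (flip f) 0 := rfl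
  rw [h0, flip_eq (rdeg_ne_zero hA),
    evalF_div _ _ (reflect_ne_zero' f.denom_ne_zero _) 0 ?_]
  · simp only [← coeff_zero_eq_eval_zero, coeff_reflect, revAt_le (Nat.zero_le _), Nat.sub_zero]
  · simp only [← coeff_zero_eq_eval_zero, coeff_reflect, revAt_le (Nat.zero_le _), Nat.sub_zero]
    exact coeff_top_ne hA

lemma locDeg_infty {f : RatFunc ℂ} (hA : 2 ≤ rdeg f) :
    locDeg f ∞ = if f.denom.coeff (rdeg f) = 0 then rdeg f - f.denom.natDegree
      else rdeg f - (f.num -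
        C (f.num.coeff (rdeg f) / f.denom.coeff (rdeg f)) * f.denom).natDegree := by
  have h0 : locDeg f ∞ = locDegF (flip f) 0 := rfl
  rw [h0, flip_eq (rdeg_ne_zero hA),
    locDegF_div _ _ (reflect_ne_zero' f.denom_ne_zero _) 0 ?_]
  · simp only [← coeff_zero_eq_eval_zero, coeff_reflect, revAt_le (Nat.zero_le _), Nat.sub_zero]
    by_cases hq : f.denom.coeff (rdeg f) = 0
    · rw [if_pos hq, if_pos hq,
        rootMultiplicity_zero_reflect f.denom_ne_zero (d := rdeg f) (le_max_right _ _)]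
    · rw [if_neg hq, if_neg hq]
      have : reflect (rdeg f) f.num -
          C (f.num.coeff (rdeg f) / f.denom.coeff (rdeg f)) * reflect (rdeg f) f.denom
          = reflect (rdeg f) (f.num -
            C (f.num.coeff (rdeg f) / f.denom.coeff (rdeg f)) * f.denom) := by
        rw [reflect_sub, reflect_C_mul]
      rw [this, rootMultiplicity_zero_reflect (sub_C_mul_ne_zero hA _)
        (d := rdeg f) (natDegree_sub_C_mul_le f _)]
  · simp only [← coeff_zero_eq_eval_zero, coeff_reflect, revAt_le (Nat.zero_le _), Nat.sub_zero]
    exact coeff_top_ne hA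



lemma coprime_eval {f : RatFunc ℂ} (z : ℂ) :
    f.num.eval z ≠ 0 ∨ f.denom.eval z ≠ 0 := by
  obtain ⟨u, v, huv⟩ := RatFunc.isCoprime_num_denom f
  by_contra h
  push_neg at h
  have := congrArg (Polynomial.eval z) huv
  simp [h.1, h.2] at this

lemma sum_rootMultiplicity {r : ℂ[X]} (hr : r ≠ 0) :
    ∑ z ∈ r.roots.toFinset, rootMultiplicity z r = r.natDegree := by
  have h1 : ∀ z ∈ r.roots.toFinset, rootMultiplicity z r = r.roots.count z :=
    fun z _ => (count_roots r).symm
  rw [Finset.sum_congr rfl h1, Multiset.toFinset_sum_count_eq]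
  exact splits_iff_card_roots.mp (IsAlgClosed.splits r)

lemma natDegree_lt_of_coeff_zero {r : ℂ[X]} (hr : r ≠ 0) {D : ℕ}
    (hle : r.natDegree ≤ D) (hc : r.coeff D = 0) : r.natDegree < D := by
  rcases lt_or_eq_of_le hle with h | h
  · exact h
  · rw [← h] at hc
    exact absurd hc (leadingCoeff_ne_zero.mpr hr)

lemma natDegree_eq_of_coeff_ne_zero' {r : ℂ[X]} {D : ℕ}
    (hle : r.natDegree ≤ D) (hc : r.coeff D ≠ 0) : r.natDegree = D :=
  le_antisymm hle (le_natDegree_of_ne_zero hc)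

lemma evalF_eq_infty_iff {f : RatFunc ℂ} (z : ℂ) :
    evalF f z = ∞ ↔ f.denom.eval z = 0 := by
  rw [evalF]
  by_cases h : f.denom.eval z = 0
  · simp [h]
  · simp [h]

lemma evalF_eq_coe_iff {f : RatFunc ℂ} (hA : 2 ≤ rdeg f) (z w₀ : ℂ) :
    evalF f z = (w₀ : OnePoint ℂ) ↔ (f.num - C w₀ * f.denom).eval z = 0 := by
  rw [evalF]
  by_cases h : f.denom.eval z = 0
  · rw [if_pos h]
    have hne : f.num.eval z ≠ 0 := (coprime_eval z).resolve_right (by simp [h])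
    simp [eval_sub, eval_mul, h, hne]
  · rw [if_neg h]
    rw [OnePoint.coe_eq_coe, div_eq_iff h]
    constructor
    · intro h'; simp [eval_sub, eval_mul, h']
    · intro h'
      have : f.num.eval z - w₀ * f.denom.eval z = 0 := by simpa [eval_sub, eval_mul] using h'
      linear_combination this

lemma locDegF_of_denom_root {f : RatFunc ℂ} {z : ℂ} (h : f.denom.eval z = 0) :
    locDegF f z = rootMultiplicity z f.denom := if_pos h

lemma locDegF_of_num_root {f : RatFunc ℂ} {z w₀ : ℂ}
    (hr : (f.num - C w₀ * f.denom).eval z = 0) (hd : f.denom.eval z ≠ 0) :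
    locDegF f z = rootMultiplicity z (f.num - C w₀ * f.denom) := by
  have hv : f.num.eval z / f.denom.eval z = w₀ := by
    have : f.num.eval z - w₀ * f.denom.eval z = 0 := by simpa [eval_sub, eval_mul] using hr
    field_simp
    linear_combination this
  rw [locDegF, if_neg hd, hv]

def toOP : ℂ → OnePoint ℂ := fun z => (z : OnePoint ℂ)

lemma toOP_eq (z : ℂ) : toOP z = (z : OnePoint ℂ) := rfl

lemma toOP_inj : Function.Injective toOP := fun a b h => OnePoint.coe_injective h

lemma mem_image_coe {s : Finset ℂ} {z : ℂ} :
    ((z : OnePoint ℂ) ∈ s.image toOP) ↔ z ∈ s := by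
  constructor
  · intro h
    obtain ⟨y, hy, hyz⟩ := Finset.mem_image.mp h
    rwa [toOP_inj hyz] at hy
  · intro h
    exact Finset.mem_image.mpr ⟨z, h, rfl⟩

lemma infty_not_mem_image_coe' {s : Finset ℂ} :
    ∞ ∉ s.image toOP := by
  intro h
  obtain ⟨y, _, hyz⟩ := Finset.mem_image.mp h
  exact coe_ne_infty y hyz

lemma sum_image_coe (s : Finset ℂ) (g : OnePoint ℂ → ℕ) :
    ∑ x ∈ s.image toOP, g x = ∑ z ∈ s, g (z : OnePoint ℂ) :=
  Finset.sum_image (fun a _ b _ h => toOP_inj h)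

lemma fiber_sum {f : RatFunc ℂ} (hA : 2 ≤ rdeg f) (w : OnePoint ℂ) :
    ∃ t : Finset (OnePoint ℂ), (∀ x, x ∈ t ↔ evalOP f x = w) ∧
      ∑ x ∈ t, locDeg f x = rdeg f := by
  induction w using OnePoint.rec with
  | infty =>
    have hq0 : f.denom ≠ 0 := f.denom_ne_zero
    have hqle : f.denom.natDegree ≤ rdeg f := le_max_right _ _
    have hsum0 : ∑ x ∈ f.denom.roots.toFinset.image toOP,
        locDeg f x = f.denom.natDegree := by
      rw [sum_image_coe]
      rw [← sum_rootMultiplicity hq0]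
      refine Finset.sum_congr rfl (fun z hz => ?_)
      have hz' : f.denom.eval z = 0 :=
        (mem_roots hq0).mp (Multiset.mem_toFinset.mp hz)
      exact locDegF_of_denom_root hz'
    have hmemc : ∀ z : ℂ, ((z : OnePoint ℂ) ∈
        f.denom.roots.toFinset.image toOP) ↔ evalOP f (z : OnePoint ℂ) = ∞ := by
      intro z
      rw [mem_image_coe, Multiset.mem_toFinset, mem_roots hq0]
      have hOP : evalOP f (z : OnePoint ℂ) = evalF f z := rfl
      rw [hOP, evalF_eq_infty_iff]
      exact Iff.rfl
    by_cases hqd : f.denom.coeff (rdeg f) = 0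
    · -- infinity is in the fiber
      have hinf : evalOP f ∞ = ∞ := by rw [evalOP_infty hA, if_pos hqd]
      have hlt : f.denom.natDegree < rdeg f := natDegree_lt_of_coeff_zero hq0 hqle hqd
      refine ⟨f.denom.roots.toFinset.image toOP ∪ {∞}, ?_, ?_⟩
      · intro x
        induction x using OnePoint.rec with
        | infty => simp [hinf]
        | coe z =>
          rw [Finset.mem_union]
          simp only [Finset.mem_singleton]
          rw [hmemc z]
          have : ((z : OnePoint ℂ) = ∞) ↔ False := ⟨coe_ne_infty z, False.elim⟩
          simp [this]
      · rw [Finset.sum_union (by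
          rw [Finset.disjoint_right]
          intro x hx
          rw [Finset.mem_singleton] at hx
          subst hx
          exact infty_not_mem_image_coe'), hsum0, Finset.sum_singleton]
        rw [locDeg_infty hA, if_pos hqd]
        omega
    · -- infinity not in the fiber
      have hinf : evalOP f ∞ ≠ ∞ := by
        rw [evalOP_infty hA, if_neg hqd]
        exact coe_ne_infty _
      have hdeg : f.denom.natDegree = rdeg f := natDegree_eq_of_coeff_ne_zero' hqle hqd
      refine ⟨f.denom.roots.toFinset.image toOP, ?_, ?_⟩
      · intro x
        induction x using OnePoint.rec with
        | infty =>
          constructor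
          · intro h; exact absurd h infty_not_mem_image_coe'
          · intro h; exact absurd h hinf
        | coe z => exact hmemc z
      · rw [hsum0, hdeg]
  | coe w₀ =>
    set r : ℂ[X] := f.num - C w₀ * f.denom with hrdef
    have hr0 : r ≠ 0 := sub_C_mul_ne_zero hA w₀
    have hrle : r.natDegree ≤ rdeg f := natDegree_sub_C_mul_le f w₀
    have hsum0 : ∑ x ∈ r.roots.toFinset.image toOP,
        locDeg f x = r.natDegree := by
      rw [sum_image_coe, ← sum_rootMultiplicity hr0]
      refine Finset.sum_congr rfl (fun z hz => ?_)
      have hz' : r.eval z = 0 := (mem_roots hr0).mp (Multiset.mem_toFinset.mp hz)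
      have hd : f.denom.eval z ≠ 0 := by
        intro hd0
        have hne : f.num.eval z ≠ 0 := (coprime_eval z).resolve_right (by simp [hd0])
        apply hne
        have : f.num.eval z - w₀ * f.denom.eval z = 0 := by
          simpa [hrdef, eval_sub, eval_mul] using hz'
        rw [hd0] at this
        simpa using this
      exact locDegF_of_num_root hz' hd
    have hmemc : ∀ z : ℂ, ((z : OnePoint ℂ) ∈
        r.roots.toFinset.image toOP) ↔
        evalOP f (z : OnePoint ℂ) = (w₀ : OnePoint ℂ) := by
      intro z
      rw [mem_image_coe, Multiset.mem_toFinset, mem_roots hr0]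
      have hOP : evalOP f (z : OnePoint ℂ) = evalF f z := rfl
      rw [hOP, evalF_eq_coe_iff hA]
      exact Iff.rfl
    have hcr : r.coeff (rdeg f) = f.num.coeff (rdeg f) - w₀ * f.denom.coeff (rdeg f) := by
      simp [hrdef, coeff_sub, coeff_C_mul]
    by_cases hcase : f.denom.coeff (rdeg f) ≠ 0 ∧
        f.num.coeff (rdeg f) / f.denom.coeff (rdeg f) = w₀
    · obtain ⟨hqd, hval⟩ := hcase
      have hinf : evalOP f ∞ = (w₀ : OnePoint ℂ) := by
        rw [evalOP_infty hA, if_neg hqd, hval]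
      have hcr0 : r.coeff (rdeg f) = 0 := by
        rw [hcr, ← hval]
        field_simp
        ring
      have hlt : r.natDegree < rdeg f := natDegree_lt_of_coeff_zero hr0 hrle hcr0
      refine ⟨r.roots.toFinset.image toOP ∪ {∞}, ?_, ?_⟩
      · intro x
        induction x using OnePoint.rec with
        | infty => simp [hinf]
        | coe z =>
          rw [Finset.mem_union]
          simp only [Finset.mem_singleton]
          rw [hmemc z]
          have : ((z : OnePoint ℂ) = ∞) ↔ False := ⟨coe_ne_infty z, False.elim⟩
          simp [this]
      · rw [Finset.sum_union (by
          rw [Finset.disjoint_right]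
          intro x hx
          rw [Finset.mem_singleton] at hx
          subst hx
          exact infty_not_mem_image_coe'), hsum0, Finset.sum_singleton]
        rw [locDeg_infty hA, if_neg hqd, hval, ← hrdef]
        omega
    · have hinf : evalOP f ∞ ≠ (w₀ : OnePoint ℂ) := by
        rw [evalOP_infty hA]
        by_cases hqd : f.denom.coeff (rdeg f) = 0
        · rw [if_pos hqd]
          exact infty_ne_coe _
        · rw [if_neg hqd]
          intro h
          exact hcase ⟨hqd, OnePoint.coe_eq_coe.mp h⟩
      have hcr0 : r.coeff (rdeg f) ≠ 0 := by
        rw [hcr]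
        by_cases hqd : f.denom.coeff (rdeg f) = 0
        · rw [hqd, mul_zero, sub_zero]
          rcases coeff_top_ne hA with h | h
          · exact h
          · exact absurd hqd h
        · intro h
          apply hcase
          refine ⟨hqd, ?_⟩
          field_simp
          linear_combination h
      have hdeg : r.natDegree = rdeg f := natDegree_eq_of_coeff_ne_zero' hrle hcr0
      refine ⟨r.roots.toFinset.image toOP, ?_, ?_⟩
      · intro x
        induction x using OnePoint.rec with
        | infty =>
          constructor
          · intro h; exact absurd h infty_not_mem_image_coe'
          · intro h; exact absurd h hinf
        | coe z => exact hmemc z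
      · rw [hsum0, hdeg]


lemma locDeg_pos {f : RatFunc ℂ} (hA : 2 ≤ rdeg f) : ∀ x, 1 ≤ locDeg f x := by
  intro x
  induction x using OnePoint.rec with
  | infty =>
    rw [locDeg_infty hA]
    by_cases hqd : f.denom.coeff (rdeg f) = 0
    · rw [if_pos hqd]
      have hlt : f.denom.natDegree < rdeg f :=
        natDegree_lt_of_coeff_zero f.denom_ne_zero (le_max_right _ _) hqd
      omega
    · rw [if_neg hqd]
      set c := f.num.coeff (rdeg f) / f.denom.coeff (rdeg f) with hc
      have h0 : (f.num - C c * f.denom) ≠ 0 := sub_C_mul_ne_zero hA c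
      have hcc : (f.num - C c * f.denom).coeff (rdeg f) = 0 := by
        rw [coeff_sub, coeff_C_mul, hc]
        field_simp
        ring
      have hlt : (f.num - C c * f.denom).natDegree < rdeg f :=
        natDegree_lt_of_coeff_zero h0 (natDegree_sub_C_mul_le f c) hcc
      omega
  | coe z =>
    have hloc : locDeg f (z : OnePoint ℂ) = locDegF f z := rfl
    rw [hloc, locDegF]
    by_cases hq : f.denom.eval z = 0
    · rw [if_pos hq]
      exact (rootMultiplicity_pos f.denom_ne_zero).mpr hq
    · rw [if_neg hq]
      set w := f.num.eval z / f.denom.eval z with hw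
      have h0 : f.num - C w * f.denom ≠ 0 := sub_C_mul_ne_zero hA w
      apply (rootMultiplicity_pos h0).mpr
      show (f.num - C w * f.denom).eval z = 0
      rw [eval_sub, eval_mul, eval_C, hw]
      field_simp
      ring

lemma wronskian_facts {a b : ℂ[X]} (ha : a ≠ 0) (hb : b ≠ 0)
    (hne : a.natDegree ≠ b.natDegree) :
    (derivative a * b - a * derivative b) ≠ 0 ∧
    (derivative a * b - a * derivative b).natDegree = a.natDegree + b.natDegree - 1 := by
  set na := a.natDegree with hna
  set nb := b.natDegree with hnb
  set k := na + nb - 1 with hk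
  have hla : a.leadingCoeff ≠ 0 := leadingCoeff_ne_zero.mpr ha
  have hlb : b.leadingCoeff ≠ 0 := leadingCoeff_ne_zero.mpr hb
  have h1 : (derivative a * b).coeff k = (na : ℂ) * a.leadingCoeff * b.leadingCoeff := by
    by_cases h : na = 0
    · have hda : derivative a = 0 := by
        have := eq_C_of_natDegree_eq_zero (hna ▸ h)
        rw [this]; simp
      rw [hda, zero_mul, coeff_zero, h]
      simp
    · have hkk : k = (na - 1) + nb := by omega
      rw [hkk, coeff_mul_add_eq_of_natDegree_le (natDegree_derivative_le a) le_rfl]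
      rw [coeff_derivative]
      have h' : na - 1 + 1 = na := by omega
      rw [h', coeff_natDegree, coeff_natDegree, Nat.cast_sub (show (1:ℕ) ≤ na by omega)]
      push_cast
      ring
  have h2 : (a * derivative b).coeff k = (nb : ℂ) * a.leadingCoeff * b.leadingCoeff := by
    by_cases h : nb = 0
    · have hdb : derivative b = 0 := by
        have := eq_C_of_natDegree_eq_zero (hnb ▸ h)
        rw [this]; simp
      rw [hdb, mul_zero, coeff_zero, h]
      simp
    · have hkk : k = na + (nb - 1) := by omega
      rw [hkk, coeff_mul_add_eq_of_natDegree_le le_rfl (natDegree_derivative_le b)]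
      rw [coeff_derivative]
      have h' : nb - 1 + 1 = nb := by omega
      rw [h', coeff_natDegree, coeff_natDegree, Nat.cast_sub (show (1:ℕ) ≤ nb by omega)]
      push_cast
      ring
  have hcoeff : (derivative a * b - a * derivative b).coeff k
      = ((na : ℂ) - (nb : ℂ)) * a.leadingCoeff * b.leadingCoeff := by
    rw [coeff_sub, h1, h2]; ring
  have hcne : (derivative a * b - a * derivative b).coeff k ≠ 0 := by
    rw [hcoeff]
    apply mul_ne_zero (mul_ne_zero _ hla) hlb
    rw [sub_ne_zero]
    exact_mod_cast hne
  have hW0 : (derivative a * b - a * derivative b) ≠ 0 := fun h => hcne (by rw [h, coeff_zero])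
  refine ⟨hW0, le_antisymm ?_ (le_natDegree_of_ne_zero hcne)⟩
  apply le_trans (natDegree_sub_le _ _)
  apply max_le
  · by_cases h : na = 0
    · have hda : derivative a = 0 := by
        have := eq_C_of_natDegree_eq_zero (hna ▸ h)
        rw [this]; simp
      rw [hda, zero_mul]
      simp
    · apply le_trans natDegree_mul_le
      have := natDegree_derivative_le a
      omega
  · by_cases h : nb = 0
    · have hdb : derivative b = 0 := by
        have := eq_C_of_natDegree_eq_zero (hnb ▸ h)
        rw [this]; simp
      rw [hdb, mul_zero]
      simp
    · apply le_trans natDegree_mul_le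
      have := natDegree_derivative_le b
      omega


lemma rootMultiplicity_neg' (a : ℂ[X]) (z : ℂ) :
    rootMultiplicity z (-a) = rootMultiplicity z a := by
  have h : -a = a * C (-1) := by simp
  rw [h, rootMultiplicity_mul_right (by simp : (C (-1) : ℂ[X]).eval z ≠ 0)]

lemma derivative_ne_zero_of_root {q : ℂ[X]} (hq : q ≠ 0) {z : ℂ} (hz : q.eval z = 0) :
    derivative q ≠ 0 := by
  intro h
  have h0 : q.natDegree = 0 := natDegree_eq_zero_of_derivative_eq_zero h
  have hqC : q = C (q.coeff 0) := eq_C_of_natDegree_eq_zero h0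
  apply hq
  have hc : q.coeff 0 = 0 := by rw [hqC, eval_C] at hz; exact hz
  rw [hqC, hc, map_zero]

lemma locDegF_wronskian {f : RatFunc ℂ} (hA : 2 ≤ rdeg f) (z : ℂ) :
    locDegF f z
      = rootMultiplicity z (derivative f.num * f.denom - f.num * derivative f.denom) + 1 := by
  set p := f.num with hp
  set q := f.denom with hqdef
  have hp0 : p ≠ 0 := num_ne_zero'' hA
  have hq0 : q ≠ 0 := f.denom_ne_zero
  by_cases hq : q.eval z = 0
  · have hpz : p.eval z ≠ 0 := (coprime_eval z).resolve_right (by simpa using hq)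
    set m := rootMultiplicity z q with hm
    have hm1 : 1 ≤ m := (rootMultiplicity_pos hq0).mpr hq
    have hq' : derivative q ≠ 0 := derivative_ne_zero_of_root hq0 hq
    have hmulB : rootMultiplicity z (-(p * derivative q)) = m - 1 := by
      rw [rootMultiplicity_neg', rootMultiplicity_mul (mul_ne_zero hp0 hq'),
        rootMultiplicity_eq_zero (fun h => hpz h), derivative_rootMultiplicity_of_root hq,
        zero_add]
    have hloc : locDegF f z = m := if_pos hq
    by_cases hp' : derivative p = 0
    · have hWeq : derivative p * q - p * derivative q = -(p * derivative q) := by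
        rw [hp']; ring
      rw [hloc, hWeq, hmulB]
      omega
    · have hWeq : derivative p * q - p * derivative q
          = -(p * derivative q) + derivative p * q := by ring
      have hmulA : m ≤ rootMultiplicity z (derivative p * q) := by
        rw [rootMultiplicity_mul (mul_ne_zero hp' hq0)]
        omega
      have hne : -(p * derivative q) ≠ 0 := by
        simpa using mul_ne_zero hp0 hq'
      rw [hloc, hWeq, rootMultiplicity_add_of_lt hne (by omega)]
      rw [hmulB]
      omega
  · set w := p.eval z / q.eval z with hw
    set r := p - C w * q with hr
    have hr0 : r ≠ 0 := sub_C_mul_ne_zero hA w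
    have hrz : r.eval z = 0 := by
      rw [hr, eval_sub, eval_mul, eval_C, hw]
      field_simp
      ring
    set m := rootMultiplicity z r with hm
    have hm1 : 1 ≤ m := (rootMultiplicity_pos hr0).mpr hrz
    have hr' : derivative r ≠ 0 := derivative_ne_zero_of_root hr0 hrz
    have hWrq : derivative p * q - p * derivative q
        = derivative r * q - r * derivative q := by
      have hdr : derivative r = derivative p - C w * derivative q := by
        rw [hr, derivative_sub, derivative_C_mul]
      rw [hdr, hr]; ring
    have hmulA : rootMultiplicity z (derivative r * q) = m - 1 := by
      rw [rootMultiplicity_mul (mul_ne_zero hr' hq0),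
        rootMultiplicity_eq_zero (fun h => hq h), derivative_rootMultiplicity_of_root hrz,
        add_zero]
    have hloc : locDegF f z = m := by
      rw [locDegF, if_neg hq]
    by_cases hq' : derivative q = 0
    · have hWeq : derivative r * q - r * derivative q = derivative r * q := by
        rw [hq']; ring
      rw [hloc, hWrq, hWeq, hmulA]
      omega
    · have hWeq : derivative r * q - r * derivative q
          = derivative r * q + -(r * derivative q) := by ring
      have hmulB : m ≤ rootMultiplicity z (-(r * derivative q)) := by
        rw [rootMultiplicity_neg', rootMultiplicity_mul (mul_ne_zero hr0 hq')]
        omega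
      have hne : derivative r * q ≠ 0 := mul_ne_zero hr' hq0
      rw [hloc, hWrq, hWeq, rootMultiplicity_add_of_lt hne (by omega), hmulA]
      omega

lemma wronskian_ne_zero_and_deg {f : RatFunc ℂ} (hA : 2 ≤ rdeg f) :
    (derivative f.num * f.denom - f.num * derivative f.denom) ≠ 0 ∧
    (derivative f.num * f.denom - f.num * derivative f.denom).natDegree + locDeg f ∞
      = 2 * rdeg f - 1 := by
  set p := f.num with hp
  set q := f.denom with hqdef
  have hp0 : p ≠ 0 := num_ne_zero'' hA
  have hq0 : q ≠ 0 := f.denom_ne_zero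
  have hqmonic : q.Monic := f.monic_denom
  rcases lt_trichotomy p.natDegree q.natDegree with hlt | heq | hgt
  · -- np < nq, rdeg = nq
    have hd : rdeg f = q.natDegree := max_eq_right hlt.le
    have hqd : q.coeff (rdeg f) ≠ 0 := by
      rw [hd]
      rw [hqmonic.coeff_natDegree]
      exact one_ne_zero
    have hpd : p.coeff (rdeg f) = 0 := coeff_eq_zero_of_natDegree_lt (by omega)
    obtain ⟨hW0, hWdeg⟩ := wronskian_facts hp0 hq0 (Nat.ne_of_lt hlt)
    refine ⟨hW0, ?_⟩
    rw [hWdeg, locDeg_infty hA, if_neg hqd, hpd, zero_div, map_zero, zero_mul, sub_zero]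
    have h2 : 2 ≤ rdeg f := hA
    have e1 : p.natDegree = f.num.natDegree := rfl
    have e2 : q.natDegree = f.denom.natDegree := rfl
    omega
  · -- np = nq = rdeg
    have hd : rdeg f = q.natDegree := by rw [rdeg, ← hp, ← hqdef, heq, max_self]
    have hqd : q.coeff (rdeg f) ≠ 0 := by
      rw [hd, hqmonic.coeff_natDegree]
      exact one_ne_zero
    set c := p.coeff (rdeg f) / q.coeff (rdeg f) with hc
    set s := p - C c * q with hs
    have hs0 : s ≠ 0 := sub_C_mul_ne_zero hA c
    have hsd : s.coeff (rdeg f) = 0 := by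
      rw [hs, coeff_sub, coeff_C_mul, hc]
      field_simp
      ring
    have hslt : s.natDegree < rdeg f :=
      natDegree_lt_of_coeff_zero hs0 (natDegree_sub_C_mul_le f c) hsd
    have hWeq : derivative p * q - p * derivative q
        = derivative s * q - s * derivative q := by
      have hds : derivative s = derivative p - C c * derivative q := by
        rw [hs, derivative_sub, derivative_C_mul]
      rw [hds, hs]; ring
    obtain ⟨hW0, hWdeg⟩ := wronskian_facts hs0 hq0 (by omega)
    rw [hWeq]
    refine ⟨hW0, ?_⟩
    rw [hWdeg, locDeg_infty hA, if_neg hqd]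
    have h2 : 2 ≤ rdeg f := hA
    have e1 : q.natDegree = f.denom.natDegree := rfl
    have e3 : s.natDegree
        = (f.num - C (f.num.coeff (rdeg f) / f.denom.coeff (rdeg f)) * f.denom).natDegree := rfl
    omega
  · -- np > nq, rdeg = np
    have hd : rdeg f = p.natDegree := max_eq_left hgt.le
    have hqd : q.coeff (rdeg f) = 0 := coeff_eq_zero_of_natDegree_lt (by omega)
    obtain ⟨hW0, hWdeg⟩ := wronskian_facts hp0 hq0 (Nat.ne_of_gt hgt)
    refine ⟨hW0, ?_⟩
    rw [hWdeg, locDeg_infty hA, if_pos hqd]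
    have h2 : 2 ≤ rdeg f := hA
    have e1 : p.natDegree = f.num.natDegree := rfl
    have e2 : q.natDegree = f.denom.natDegree := rfl
    omega

lemma rh_sum {f : RatFunc ℂ} (hA : 2 ≤ rdeg f) :
    ∃ t : Finset (OnePoint ℂ), (∀ x, x ∉ t → locDeg f x = 1) ∧
      ∑ x ∈ t, (locDeg f x - 1) = 2 * rdeg f - 2 := by
  set W := derivative f.num * f.denom - f.num * derivative f.denom with hW
  obtain ⟨hW0, hWkey⟩ := wronskian_ne_zero_and_deg hA
  refine ⟨W.roots.toFinset.image toOP ∪ {∞}, ?_, ?_⟩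
  · intro x hx
    induction x using OnePoint.rec with
    | infty => exact absurd (Finset.mem_union_right _ (Finset.mem_singleton_self _)) hx
    | coe z =>
      have hz : z ∉ W.roots.toFinset := by
        intro h
        exact hx (Finset.mem_union_left _ (Finset.mem_image.mpr ⟨z, h, rfl⟩))
      have hz' : ¬ W.IsRoot z := by
        intro h
        exact hz (Multiset.mem_toFinset.mpr ((mem_roots hW0).mpr h))
      have hloc : locDeg f (z : OnePoint ℂ) = locDegF f z := rfl
      rw [hloc, locDegF_wronskian hA, rootMultiplicity_eq_zero hz']
  · rw [Finset.sum_union (by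
      rw [Finset.disjoint_right]
      intro x hx
      rw [Finset.mem_singleton] at hx
      subst hx
      exact infty_not_mem_image_coe')]
    rw [Finset.sum_singleton, sum_image_coe]
    have hsum : ∑ z ∈ W.roots.toFinset, (locDeg f (z : OnePoint ℂ) - 1) = W.natDegree := by
      rw [← sum_rootMultiplicity hW0]
      refine Finset.sum_congr rfl (fun z _ => ?_)
      have hloc : locDeg f (z : OnePoint ℂ) = locDegF f z := rfl
      rw [hloc, locDegF_wronskian hA]
      omega
    rw [hsum]
    have hpos := locDeg_pos hA ∞
    have h2 : 2 ≤ rdeg f := hA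
    have e : W.natDegree + locDeg f ∞ = 2 * rdeg f - 1 := hWkey
    omega



lemma covering_of_minHolo {f : RatFunc ℂ} (hA : 2 ≤ rdeg f) (O : Orbifold)
    (hm : IsMinHolo f O O) (hχ : O.eulerChar = 0) :
    ∀ z, O.nu (evalOP f z) = O.nu z * locDeg f z := by
  classical
  set d := rdeg f with hd
  set S := O.finite.toFinset with hSdef
  have hS : ∀ w, w ∈ S ↔ O.nu w ≠ 1 := fun w => O.finite.mem_toFinset
  have hχ' : ∑ w ∈ S, ((O.nu w : ℚ)⁻¹ - 1) = -2 := by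
    have h0 := hχ
    rw [Orbifold.eulerChar] at h0
    linarith
  choose t ht1 ht2 using fun w => fiber_sum hA w
  set T := S.biUnion t with hTdef
  have hT : ∀ z, z ∈ T ↔ evalOP f z ∈ S := by
    intro z
    rw [hTdef, Finset.mem_biUnion]
    constructor
    · rintro ⟨w, hw, hz⟩
      rw [(ht1 w z).mp hz]
      exact hw
    · intro h
      exact ⟨evalOP f z, h, (ht1 _ z).mpr rfl⟩
  have hdisj : (↑S : Set (OnePoint ℂ)).PairwiseDisjoint t := by
    intro w₁ _ w₂ _ hne
    rw [Function.onFun, Finset.disjoint_left]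
    intro x hx1 hx2
    exact hne (((ht1 w₁ x).mp hx1).symm.trans ((ht1 w₂ x).mp hx2))
  have claim1 : ∑ z ∈ T, (locDeg f z : ℚ) * ((O.nu (evalOP f z) : ℚ)⁻¹ - 1) = (d : ℚ) * (-2) := by
    rw [hTdef, Finset.sum_biUnion hdisj]
    have hinner : ∀ w ∈ S, ∑ z ∈ t w, (locDeg f z : ℚ) * ((O.nu (evalOP f z) : ℚ)⁻¹ - 1)
        = (d : ℚ) * ((O.nu w : ℚ)⁻¹ - 1) := by
      intro w hw
      have hcongr : ∀ z ∈ t w, (locDeg f z : ℚ) * ((O.nu (evalOP f z) : ℚ)⁻¹ - 1)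
          = (locDeg f z : ℚ) * ((O.nu w : ℚ)⁻¹ - 1) := by
        intro z hz
        rw [(ht1 w z).mp hz]
      rw [Finset.sum_congr rfl hcongr, ← Finset.sum_mul, ← Nat.cast_sum, ht2 w]
    rw [Finset.sum_congr rfl hinner, ← Finset.mul_sum, hχ']
  have hST : S ⊆ T := by
    intro z hz
    rw [hT]
    rw [hS] at hz ⊢
    intro h1
    have h2 := hm z
    rw [h1] at h2
    exact hz (mul_eq_one.mp h2.symm).1
  have claim2 : ∑ z ∈ T, ((O.nu z : ℚ)⁻¹ - 1) = -2 := by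
    rw [← Finset.sum_subset hST (fun x _ hxs => by
      have h1 : O.nu x = 1 := not_not.mp (fun h => hxs ((hS x).mpr h))
      rw [h1]
      simp)]
    exact hχ'
  obtain ⟨R, hR1, hR2⟩ := rh_sum hA
  have h2d : 2 ≤ d := hA
  have hcast2d : ((2 * d - 2 : ℕ) : ℚ) = 2 * (d : ℚ) - 2 := by
    push_cast [Nat.cast_sub (by omega : 2 ≤ 2 * d)]
    ring
  have hsumR : ∑ x ∈ R, ((locDeg f x : ℚ) - 1) = 2 * (d : ℚ) - 2 := by
    rw [← hcast2d, ← hR2, Nat.cast_sum]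
    exact Finset.sum_congr rfl (fun x _ => by
      rw [Nat.cast_sub (locDeg_pos hA x), Nat.cast_one])
  have htermnn : ∀ x, (0 : ℚ) ≤ (locDeg f x : ℚ) - 1 := by
    intro x
    have h1 := locDeg_pos hA x
    rw [sub_nonneg]
    exact_mod_cast h1
  have hTR : ∑ z ∈ T, ((locDeg f z : ℚ) - 1) = ∑ z ∈ T ∩ R, ((locDeg f z : ℚ) - 1) := by
    refine (Finset.sum_subset Finset.inter_subset_left (fun x hx hnx => ?_)).symm
    have h1 : x ∉ R := fun h => hnx (Finset.mem_inter.mpr ⟨hx, h⟩)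
    rw [hR1 x h1]
    simp
  have hTle : ∑ z ∈ T, ((locDeg f z : ℚ) - 1) ≤ 2 * (d : ℚ) - 2 := by
    rw [hTR, ← hsumR]
    exact Finset.sum_le_sum_of_subset_of_nonneg Finset.inter_subset_right
      (fun x _ _ => htermnn x)
  set τ : OnePoint ℂ → ℚ :=
    fun z => (O.nu z : ℚ)⁻¹ - (locDeg f z : ℚ) * (O.nu (evalOP f z) : ℚ)⁻¹ with hτ
  have hbalance : ∑ z ∈ T, τ z + ∑ z ∈ T, ((locDeg f z : ℚ) - 1) = -2 - (d : ℚ) * (-2) := by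
    have hsplit : ∑ z ∈ T, τ z + ∑ z ∈ T, ((locDeg f z : ℚ) - 1)
        = ∑ z ∈ T, ((O.nu z : ℚ)⁻¹ - 1)
          - ∑ z ∈ T, (locDeg f z : ℚ) * ((O.nu (evalOP f z) : ℚ)⁻¹ - 1) := by
      rw [← Finset.sum_add_distrib, ← Finset.sum_sub_distrib]
      refine Finset.sum_congr rfl (fun z _ => ?_)
      show (O.nu z : ℚ)⁻¹ - (locDeg f z : ℚ) * (O.nu (evalOP f z) : ℚ)⁻¹
          + ((locDeg f z : ℚ) - 1) = _
      ring
    rw [hsplit, claim1, claim2]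
  have hτsum : 0 ≤ ∑ z ∈ T, τ z := by linarith
  have hνpos : ∀ w, (0 : ℚ) < (O.nu w : ℚ)⁻¹ := by
    intro w
    have h1 := O.one_le w
    apply inv_pos.mpr
    exact_mod_cast Nat.lt_of_lt_of_le Nat.zero_lt_one h1
  have hfact : ∀ z, τ z = ((Nat.gcd (locDeg f z) (O.nu (evalOP f z)) : ℚ) - (locDeg f z : ℚ))
      * (O.nu (evalOP f z) : ℚ)⁻¹ := by
    intro z
    have hmz := hm z
    have hkey : (O.nu z : ℚ)⁻¹ = (Nat.gcd (locDeg f z) (O.nu (evalOP f z)) : ℚ) *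
        (O.nu (evalOP f z) : ℚ)⁻¹ := by
      have h1 : (O.nu (evalOP f z) : ℚ)
          = (O.nu z : ℚ) * (Nat.gcd (locDeg f z) (O.nu (evalOP f z)) : ℚ) := by
        exact_mod_cast congrArg (fun n : ℕ => (n : ℚ)) hmz
      have hz0 : (O.nu z : ℚ) ≠ 0 := Nat.cast_ne_zero.mpr (by have := O.one_le z; omega)
      have hAz0 : (O.nu (evalOP f z) : ℚ) ≠ 0 :=
        Nat.cast_ne_zero.mpr (by have := O.one_le (evalOP f z); omega)
      have hg0 : ((Nat.gcd (locDeg f z) (O.nu (evalOP f z))) : ℚ) ≠ 0 := by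
        intro h
        rw [h, mul_zero] at h1
        exact hAz0 h1
      rw [h1, mul_inv]
      field_simp
    show (O.nu z : ℚ)⁻¹ - (locDeg f z : ℚ) * (O.nu (evalOP f z) : ℚ)⁻¹ = _
    rw [hkey]
    ring
  have hτnonpos : ∀ z ∈ T, τ z ≤ 0 := by
    intro z _
    rw [hfact z]
    apply mul_nonpos_of_nonpos_of_nonneg
    · rw [sub_nonpos]
      have hgle : Nat.gcd (locDeg f z) (O.nu (evalOP f z)) ≤ locDeg f z :=
        Nat.gcd_le_left _ (locDeg_pos hA z)
      exact_mod_cast hgle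
    · exact (hνpos _).le
  have hτsum0 : ∑ z ∈ T, τ z = 0 :=
    le_antisymm (Finset.sum_nonpos hτnonpos) hτsum
  have hτzero : ∀ z ∈ T, τ z = 0 :=
    fun z hz => (Finset.sum_eq_zero_iff_of_nonpos hτnonpos).mp hτsum0 z hz
  have hcovT : ∀ z ∈ T, O.nu (evalOP f z) = O.nu z * locDeg f z := by
    intro z hz
    have h0 := hτzero z hz
    rw [hfact z] at h0
    rcases mul_eq_zero.mp h0 with h1 | h1
    · have h2 : (Nat.gcd (locDeg f z) (O.nu (evalOP f z)) : ℚ) = (locDeg f z : ℚ) := by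
        linarith
      have h3 : Nat.gcd (locDeg f z) (O.nu (evalOP f z)) = locDeg f z := by
        exact_mod_cast h2
      rw [hm z, h3]
    · exact absurd h1 (hνpos _).ne'
  have hTeq : ∑ z ∈ T, ((locDeg f z : ℚ) - 1) = 2 * (d : ℚ) - 2 := by linarith
  have hRT : ∀ z ∈ R, z ∉ T → locDeg f z = 1 := by
    have hsplit := Finset.sum_filter_add_sum_filter_not R (fun x => x ∈ T)
      (fun x => (locDeg f x : ℚ) - 1)
    have hfilter : R.filter (fun x => x ∈ T) = T ∩ R := by
      ext x
      simp [Finset.mem_filter, Finset.mem_inter, and_comm]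
    rw [hfilter] at hsplit
    have hzero : ∑ x ∈ R.filter (fun x => x ∉ T), ((locDeg f x : ℚ) - 1) = 0 := by
      rw [← hTR] at hsplit
      rw [hTeq] at hsplit
      linarith [hsumR]
    intro z hzR hzT
    have hmem : z ∈ R.filter (fun x => x ∉ T) := Finset.mem_filter.mpr ⟨hzR, hzT⟩
    have h0 := (Finset.sum_eq_zero_iff_of_nonneg (fun x _ => htermnn x)).mp hzero z hmem
    have h1 : (locDeg f z : ℚ) = 1 := by linarith
    exact_mod_cast h1
  intro z
  by_cases hz : z ∈ T
  · exact hcovT z hz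
  · have hl1 : locDeg f z = 1 := by
      by_cases hzR : z ∈ R
      · exact hRT z hzR hz
      · exact hR1 z hzR
    have hAz : O.nu (evalOP f z) = 1 := not_not.mp (fun h => hz ((hT z).mpr ((hS _).mpr h)))
    have hz1 : O.nu z = 1 := by
      have h2 := hm z
      rw [hAz] at h2
      exact (mul_eq_one.mp h2.symm).1
    rw [hAz, hz1, hl1]


theorem unique_euler_zero_orbifold' (A : RatFunc ℂ) (hA : 2 ≤ rdeg A)
    (O₁ O₂ : Orbifold)
    (hχ₁ : O₁.eulerChar = 0) (hχ₂ : O₂.eulerChar = 0)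
    (hm₁ : IsMinHolo A O₁ O₁) (hm₂ : IsMinHolo A O₂ O₂) :
    O₁ = O₂ := by
  classical
  have cov₁ := covering_of_minHolo hA O₁ hm₁ hχ₁
  have cov₂ := covering_of_minHolo hA O₂ hm₂ hχ₂
  have hnu : O₁.nu = O₂.nu := by
    by_contra hne
    set F := (O₁.finite.toFinset ∪ O₂.finite.toFinset).filter
      (fun z => O₁.nu z ≠ O₂.nu z) with hF
    have hFmem : ∀ z, z ∈ F ↔ O₁.nu z ≠ O₂.nu z := by
      intro z
      rw [hF, Finset.mem_filter]
      constructor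
      · exact fun h => h.2
      · intro h
        refine ⟨?_, h⟩
        rw [Finset.mem_union]
        by_contra hu
        push_neg at hu
        obtain ⟨h1, h2⟩ := hu
        have e1 : O₁.nu z = 1 := not_not.mp (fun hh => h1 (O₁.finite.mem_toFinset.mpr hh))
        have e2 : O₂.nu z = 1 := not_not.mp (fun hh => h2 (O₂.finite.mem_toFinset.mpr hh))
        exact h (e1.trans e2.symm)
    have hFne : F.Nonempty := by
      rcases Function.ne_iff.mp hne with ⟨z, hz⟩
      exact ⟨z, (hFmem z).mpr hz⟩
    have hinv : ∀ z, z ∈ F ↔ evalOP A z ∈ F := by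
      intro z
      rw [hFmem, hFmem]
      have e1 := cov₁ z
      have e2 := cov₂ z
      have hl := locDeg_pos hA z
      constructor
      · intro h h'
        rw [e1, e2] at h'
        exact h (Nat.eq_of_mul_eq_mul_right (by omega) h')
      · intro h h'
        apply h
        rw [e1, e2, h']
    choose t ht1 ht2 using fun w => fiber_sum hA w
    have hmapsto : ∀ z ∈ F, evalOP A z ∈ F := fun z hz => (hinv z).mp hz
    have hfibne : ∀ w : OnePoint ℂ, ∃ z, evalOP A z = w := by
      intro w
      have hs := ht2 w
      have hne' : (t w).Nonempty := by
        by_contra he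
        rw [Finset.not_nonempty_iff_eq_empty] at he
        rw [he, Finset.sum_empty] at hs
        omega
      obtain ⟨z, hz⟩ := hne'
      exact ⟨z, (ht1 w z).mp hz⟩
    set φ : {x // x ∈ F} → {x // x ∈ F} :=
      fun x => ⟨evalOP A x.1, hmapsto x.1 x.2⟩ with hφ
    have hsurj : Function.Surjective φ := by
      rintro ⟨w, hw⟩
      obtain ⟨z, hz⟩ := hfibne w
      have hzF : z ∈ F := (hinv z).mpr (hz ▸ hw)
      exact ⟨⟨z, hzF⟩, Subtype.ext hz⟩
    have hinj : Function.Injective φ := Finite.injective_iff_surjective.mpr hsurj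
    have hsingle : ∀ z ∈ F, locDeg A z = rdeg A := by
      intro z hz
      have hw : evalOP A z ∈ F := hmapsto z hz
      have htw : t (evalOP A z) = {z} := by
        apply Finset.eq_singleton_iff_unique_mem.mpr
        refine ⟨(ht1 _ z).mpr rfl, ?_⟩
        intro x hx
        have hxw : evalOP A x = evalOP A z := (ht1 _ x).mp hx
        have hxF : x ∈ F := (hinv x).mpr (hxw ▸ hw)
        have hxz : φ ⟨x, hxF⟩ = φ ⟨z, hz⟩ := Subtype.ext hxw
        exact congrArg Subtype.val (hinj hxz)
      have hs := ht2 (evalOP A z)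
      rw [htw, Finset.sum_singleton] at hs
      exact hs
    have hFne2 : F.Nonempty := hFne
    obtain ⟨z₀, hz₀⟩ := hFne2
    set g : ℕ → OnePoint ℂ := fun n => (evalOP A)^[n] z₀ with hg
    have hgF : ∀ n, g n ∈ F := by
      intro n
      induction n with
      | zero => exact hz₀
      | succ n ih =>
        have hstep : g (n + 1) = evalOP A (g n) := Function.iterate_succ_apply' _ _ _
        rw [hstep]
        exact hmapsto _ ih
    have hgrow : ∀ n, O₁.nu (g n) = O₁.nu z₀ * rdeg A ^ n := by
      intro n
      induction n with
      | zero => simp [hg]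
      | succ n ih =>
        have hstep : g (n + 1) = evalOP A (g n) := Function.iterate_succ_apply' _ _ _
        rw [hstep, cov₁ (g n), ih, hsingle _ (hgF n)]
        ring
    set B := (F.image O₁.nu).max' (hFne.image O₁.nu) with hB
    have hle : ∀ n, O₁.nu (g n) ≤ B := fun n =>
      Finset.le_max' _ _ (Finset.mem_image.mpr ⟨g n, hgF n, rfl⟩)
    have hcon : B < O₁.nu (g B) := by
      rw [hgrow B]
      calc B < 2 ^ B := Nat.lt_two_pow_self
      _ ≤ rdeg A ^ B := Nat.pow_le_pow_left hA B
      _ ≤ O₁.nu z₀ * rdeg A ^ B := Nat.le_mul_of_pos_left _ (O₁.one_le z₀)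
    exact absurd (hle B) (not_le.mpr hcon)
  cases O₁ with
  | mk nu1 h1a h1b =>
    cases O₂ with
    | mk nu2 h2a h2b =>
      have : nu1 = nu2 := hnu
      subst this
      rfl


/-- **Theorem (uniqueness of the parabolic orbifold).** For a rational map `A` of degree
at least two there is at most one orbifold `O` with `χ(O) = 0` such that `A : O → O` is a
minimal holomorphic map between orbifolds. -/
theorem unique_euler_zero_orbifold (A : RatFunc ℂ) (hA : 2 ≤ rdeg A)
    (O₁ O₂ : Orbifold) (h₁ : O₁.Good) (h₂ : O₂.Good)
    (hχ₁ : O₁.eulerChar = 0) (hχ₂ : O₂.eulerChar = 0)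
    (hm₁ : IsMinHolo A O₁ O₁) (hm₂ : IsMinHolo A O₂ O₂) :
    O₁ = O₂ :=
  unique_euler_zero_orbifold' A hA O₁ O₂ hχ₁ hχ₂ hm₁ hm₂

end GenLattes
end
end

section
/- Let d ≥ 2 and let O be a nontrivial orbifold on ℂP¹ with ramification function ν. The map z ↦ z^d (respectively, z ↦ z^{−d}) is a minimal holomorphic map O → O if and only if there exists n ≥ 2 with gcd(d, n) = 1 such that ν(0) = ν(∞) = n and ν(z) = 1 for all z ∉ {0, ∞}. -/
open Polynomial OnePoint
open scoped Classical

noncomputable section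

namespace GenLattes


-- basic reductions
lemma evalOP_coe (f : RatFunc ℂ) (z : ℂ) : evalOP f (z : OnePoint ℂ) = evalF f z := rfl
lemma evalOP_infty_s8 (f : RatFunc ℂ) : evalOP f ∞ = evalF (flip f) 0 := rfl
lemma locDeg_coe (f : RatFunc ℂ) (z : ℂ) : locDeg f (z : OnePoint ℂ) = locDegF f z := rfl
lemma locDeg_infty_s8 (f : RatFunc ℂ) : locDeg f ∞ = locDegF (flip f) 0 := rfl

-- num/denom
lemma num_Xpow (d : ℕ) : (RatFunc.X ^ d : RatFunc ℂ).num = X ^ d := by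
  rw [← RatFunc.algebraMap_X, ← map_pow, RatFunc.num_algebraMap]
lemma denom_Xpow (d : ℕ) : (RatFunc.X ^ d : RatFunc ℂ).denom = 1 := by
  rw [← RatFunc.algebraMap_X, ← map_pow, RatFunc.denom_algebraMap]
lemma num_Xpow_inv (d : ℕ) : ((RatFunc.X ^ d : RatFunc ℂ)⁻¹).num = 1 := by
  rw [← RatFunc.algebraMap_X, ← map_pow, inv_eq_one_div,
    ← map_one (algebraMap ℂ[X] (RatFunc ℂ)), RatFunc.num_div]
  simp [Polynomial.Monic.leadingCoeff (monic_X_pow d)]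
lemma denom_Xpow_inv (d : ℕ) : ((RatFunc.X ^ d : RatFunc ℂ)⁻¹).denom = X ^ d := by
  rw [← RatFunc.algebraMap_X, ← map_pow, inv_eq_one_div,
    ← map_one (algebraMap ℂ[X] (RatFunc ℂ)),
    RatFunc.denom_div _ (pow_ne_zero d X_ne_zero)]
  simp [Polynomial.Monic.leadingCoeff (monic_X_pow d)]
lemma flip_Xpow (d : ℕ) : flip (RatFunc.X ^ d) = (RatFunc.X ^ d)⁻¹ := by
  unfold flip rcomp
  rw [num_Xpow, denom_Xpow]
  simp [inv_pow]
lemma flip_Xpow_inv (d : ℕ) : flip ((RatFunc.X ^ d)⁻¹) = RatFunc.X ^ d := by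
  unfold flip rcomp
  rw [num_Xpow_inv, denom_Xpow_inv]
  simp [inv_pow]

-- root multiplicities
lemma rm_zero_Xpow (d : ℕ) : rootMultiplicity (0:ℂ) (X ^ d) = d := by
  simpa using rootMultiplicity_X_sub_C_pow (0:ℂ) d
lemma rm_one (d : ℕ) (hd : 1 ≤ d) (z : ℂ) (hz : z ≠ 0) :
    rootMultiplicity z (X ^ d - C (z ^ d)) = 1 := by
  have hsep : Separable (X ^ d - C (z ^ d) : ℂ[X]) :=
    separable_X_pow_sub_C _ (Nat.cast_ne_zero.2 (by omega)) (pow_ne_zero _ hz)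
  have hne : (X ^ d - C (z ^ d) : ℂ[X]) ≠ 0 := X_pow_sub_C_ne_zero (by omega) _
  have hroot : IsRoot (X ^ d - C (z ^ d)) z := by simp [IsRoot]
  have h1 : 1 ≤ rootMultiplicity z (X ^ d - C (z ^ d)) :=
    (rootMultiplicity_pos hne).2 hroot
  have h2 : rootMultiplicity z (X ^ d - C (z ^ d)) ≤ 1 := by
    rw [← count_roots]
    exact (Multiset.nodup_iff_count_le_one.mp (nodup_roots hsep)) z
  omega

-- evaluation of X^d
lemma evalOP_pow_coe (d : ℕ) (z : ℂ) :
    evalOP (RatFunc.X ^ d) (z : OnePoint ℂ) = ((z ^ d : ℂ) : OnePoint ℂ) := by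
  rw [evalOP_coe]
  unfold evalF
  rw [num_Xpow, denom_Xpow]
  simp
lemma evalOP_pow_infty (d : ℕ) (hd : 1 ≤ d) : evalOP (RatFunc.X ^ d) ∞ = ∞ := by
  rw [evalOP_infty_s8, flip_Xpow]
  unfold evalF
  rw [denom_Xpow_inv]
  simp [zero_pow (by omega : d ≠ 0)]
lemma locDeg_pow_coe (d : ℕ) (hd : 1 ≤ d) (z : ℂ) (hz : z ≠ 0) :
    locDeg (RatFunc.X ^ d) (z : OnePoint ℂ) = 1 := by
  rw [locDeg_coe]
  unfold locDegF
  rw [num_Xpow, denom_Xpow]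
  simp only [eval_one, one_ne_zero, if_false, div_one, mul_one, eval_pow, eval_X]
  exact rm_one d hd z hz
lemma locDeg_pow_zero (d : ℕ) (hd : 1 ≤ d) :
    locDeg (RatFunc.X ^ d) ((0:ℂ) : OnePoint ℂ) = d := by
  rw [locDeg_coe]
  unfold locDegF
  rw [num_Xpow, denom_Xpow]
  simp only [eval_one, one_ne_zero, if_false, div_one, mul_one, eval_pow, eval_X]
  rw [zero_pow (by omega : d ≠ 0)]
  simpa using rm_zero_Xpow d
lemma locDeg_pow_infty (d : ℕ) (hd : 1 ≤ d) : locDeg (RatFunc.X ^ d) ∞ = d := by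
  rw [locDeg_infty_s8, flip_Xpow]
  unfold locDegF
  rw [denom_Xpow_inv]
  simp [zero_pow (by omega : d ≠ 0), rm_zero_Xpow d]

-- evaluation of (X^d)⁻¹
lemma evalOP_inv_coe (d : ℕ) (z : ℂ) (hz : z ≠ 0) :
    evalOP ((RatFunc.X ^ d)⁻¹) (z : OnePoint ℂ) = (((z ^ d)⁻¹ : ℂ) : OnePoint ℂ) := by
  rw [evalOP_coe]
  unfold evalF
  rw [num_Xpow_inv, denom_Xpow_inv]
  have hzd : (z : ℂ) ^ d ≠ 0 := pow_ne_zero d hz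
  simp only [eval_pow, eval_X, eval_one, hzd, if_false, one_div]
lemma evalOP_inv_zero (d : ℕ) (hd : 1 ≤ d) :
    evalOP ((RatFunc.X ^ d)⁻¹) ((0:ℂ) : OnePoint ℂ) = ∞ := by
  rw [evalOP_coe]
  unfold evalF
  rw [denom_Xpow_inv]
  simp [zero_pow (by omega : d ≠ 0)]
lemma evalOP_inv_infty (d : ℕ) (hd : 1 ≤ d) :
    evalOP ((RatFunc.X ^ d)⁻¹) ∞ = ((0:ℂ) : OnePoint ℂ) := by
  rw [evalOP_infty_s8, flip_Xpow_inv]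
  unfold evalF
  rw [num_Xpow, denom_Xpow]
  simp [zero_pow (by omega : d ≠ 0)]
lemma locDeg_inv_coe (d : ℕ) (hd : 1 ≤ d) (z : ℂ) (hz : z ≠ 0) :
    locDeg ((RatFunc.X ^ d)⁻¹) (z : OnePoint ℂ) = 1 := by
  rw [locDeg_coe]
  unfold locDegF
  rw [num_Xpow_inv, denom_Xpow_inv]
  have hzd : (z : ℂ) ^ d ≠ 0 := pow_ne_zero d hz
  simp only [eval_pow, eval_X, hzd, if_false, eval_one]
  have hfac : (1 - C ((1:ℂ) / z ^ d) * X ^ d : ℂ[X])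
      = C (-(z ^ d)⁻¹) * (X ^ d - C (z ^ d)) := by
    have h1 : ((-(z ^ d)⁻¹) * (z ^ d) : ℂ) = -1 := by field_simp
    rw [mul_sub, ← C_mul, h1, one_div, map_neg, map_neg, map_one]
    ring
  rw [hfac, rootMultiplicity_mul (by
    apply mul_ne_zero
    · simpa using inv_ne_zero hzd
    · exact X_pow_sub_C_ne_zero (by omega) _)]
  rw [rootMultiplicity_C, rm_one d hd z hz]
lemma locDeg_inv_zero (d : ℕ) (hd : 1 ≤ d) :
    locDeg ((RatFunc.X ^ d)⁻¹) ((0:ℂ) : OnePoint ℂ) = d := by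
  rw [locDeg_coe]
  unfold locDegF
  rw [denom_Xpow_inv]
  simp [zero_pow (by omega : d ≠ 0), rm_zero_Xpow d]
lemma locDeg_inv_infty (d : ℕ) (hd : 1 ≤ d) :
    locDeg ((RatFunc.X ^ d)⁻¹) ∞ = d := by
  rw [locDeg_infty_s8, flip_Xpow_inv]
  unfold locDegF
  rw [num_Xpow, denom_Xpow]
  simp only [eval_one, one_ne_zero, if_false, div_one, mul_one, eval_pow, eval_X]
  rw [zero_pow (by omega : d ≠ 0)]
  simpa using rm_zero_Xpow d

lemma card_nthRoots_toFinset (n : ℕ) (hn : 1 ≤ n) (c : ℂ) (hc : c ≠ 0) :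
    (nthRoots n c).toFinset.card = n := by
  have hsep : Separable (X ^ n - C c : ℂ[X]) :=
    separable_X_pow_sub_C _ (Nat.cast_ne_zero.2 (by omega)) hc
  have hnodup : (nthRoots n c).Nodup := nodup_roots hsep
  rw [Multiset.toFinset_card_of_nodup hnodup]
  show Multiset.card (X ^ n - C c : ℂ[X]).roots = n
  rw [splits_iff_card_roots.mp (IsAlgClosed.splits _), natDegree_X_pow_sub_C]

/-- If `ν` is constant along `e`-th power preimages away from `0`, then `ν = 1`
away from `0` and `∞`. -/
lemma away (O : Orbifold) (e : ℕ) (he : 2 ≤ e)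
    (hstep : ∀ w : ℂ, w ≠ 0 → O.nu ((w ^ e : ℂ) : OnePoint ℂ) = O.nu (w : OnePoint ℂ))
    (z : ℂ) (hz : z ≠ 0) : O.nu (z : OnePoint ℂ) = 1 := by
  by_contra hnu
  have claim : ∀ k : ℕ, ∀ w : ℂ, w ^ (e ^ k) = z → O.nu (w : OnePoint ℂ) = O.nu (z : OnePoint ℂ) := by
    intro k
    induction k with
    | zero => intro w hw; simp only [pow_zero, pow_one] at hw; rw [hw]
    | succ k ih =>
      intro w hw
      have hw0 : w ≠ 0 := by
        rintro rfl
        rw [zero_pow (pow_ne_zero _ (by omega : e ≠ 0))] at hw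
        exact hz hw.symm
      have h1 : (w ^ e) ^ (e ^ k) = z := by
        rw [← pow_mul, ← pow_succ']
        exact hw
      rw [← hstep w hw0]
      exact ih _ h1
  set N := O.finite.toFinset.card with hN
  have hsub : ∀ w ∈ (nthRoots (e ^ N) z).toFinset, (w : OnePoint ℂ) ∈ O.finite.toFinset := by
    intro w hw
    rw [Multiset.mem_toFinset, mem_nthRoots (pow_pos (by omega : 0 < e) N)] at hw
    rw [Set.Finite.mem_toFinset]
    show O.nu (w : OnePoint ℂ) ≠ 1
    rw [claim N w hw]
    exact hnu
  have hinj : Set.InjOn (fun w : ℂ => (w : OnePoint ℂ)) ((nthRoots (e ^ N) z).toFinset : Set ℂ) := by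
    intro a _ b _ hab
    exact OnePoint.coe_eq_coe.mp hab
  have hcard := Finset.card_le_card_of_injOn _ hsub hinj
  rw [card_nthRoots_toFinset _ (Nat.one_le_pow _ _ (by omega)) z hz] at hcard
  have h2 : N < 2 ^ N := Nat.lt_two_pow_self
  have h3 : 2 ^ N ≤ e ^ N := Nat.pow_le_pow_left (by omega) N
  omega

lemma gcd_one_aux (a g : ℕ) (ha : 1 ≤ a) (h : a = a * g) : g = 1 :=
  (Nat.eq_of_mul_eq_mul_left ha (by rw [mul_one, ← h])).symm

lemma good_conclude (O : Orbifold) (hO : O.Good) (hnt : O.IsNontrivial)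
    (haway : ∀ z : OnePoint ℂ, z ≠ ((0:ℂ) : OnePoint ℂ) → z ≠ ∞ → O.nu z = 1) :
    2 ≤ O.nu ((0:ℂ) : OnePoint ℂ) ∧ O.nu ((0:ℂ) : OnePoint ℂ) = O.nu ∞ := by
  obtain ⟨w, hw⟩ := hnt
  have hw' : w = ((0:ℂ) : OnePoint ℂ) ∨ w = ∞ := by
    by_contra hc
    push_neg at hc
    have := haway w hc.1 hc.2
    omega
  by_cases h0 : O.nu ((0:ℂ) : OnePoint ℂ) = 1
  · have hinf : 1 < O.nu ∞ := by
      rcases hw' with rfl | rfl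
      · omega
      · exact hw
    exfalso
    apply hO.1
    refine ⟨∞, ?_⟩
    ext x
    simp only [Set.mem_setOf_eq, Set.mem_singleton_iff]
    constructor
    · intro hx
      by_contra hxi
      rcases eq_or_ne x ((0:ℂ) : OnePoint ℂ) with rfl | hx0
      · exact hx h0
      · exact hx (haway x hx0 hxi)
    · rintro rfl; omega
  · by_cases hinf : O.nu ∞ = 1
    · exfalso
      apply hO.1
      refine ⟨((0:ℂ) : OnePoint ℂ), ?_⟩
      ext x
      simp only [Set.mem_setOf_eq, Set.mem_singleton_iff]
      constructor
      · intro hx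
        by_contra hx0
        rcases eq_or_ne x ∞ with rfl | hxi
        · exact hx hinf
        · exact hx (haway x hx0 hxi)
      · rintro rfl; exact h0
    · have h2 : 2 ≤ O.nu ((0:ℂ) : OnePoint ℂ) := by
        have := O.one_le ((0:ℂ) : OnePoint ℂ); omega
      refine ⟨h2, ?_⟩
      by_contra hne
      apply hO.2
      refine ⟨((0:ℂ) : OnePoint ℂ), ∞, OnePoint.coe_ne_infty _, ?_, hne⟩
      ext x
      simp only [Set.mem_setOf_eq, Set.mem_insert_iff, Set.mem_singleton_iff]
      constructor
      · intro hx
        by_contra hc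
        push_neg at hc
        exact hx (haway x hc.1 hc.2)
      · rintro (rfl | rfl)
        · exact h0
        · exact hinf

/-- **Theorem (power maps).** For `d ≥ 2` and a nontrivial orbifold `O`, the map
`z ↦ z^d` (resp. `z ↦ z^{-d}`) is a minimal holomorphic self-map of `O` if and only if
`ν(0) = ν(∞) = n` for some `n ≥ 2` coprime with `d`, and `ν(z) = 1` elsewhere. -/
theorem power_map_minimal (d : ℕ) (hd : 2 ≤ d) (O : Orbifold) (hO : O.Good)
    (hnt : O.IsNontrivial) :
    (IsMinHolo (RatFunc.X ^ d) O O ↔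
      ∃ n : ℕ, 2 ≤ n ∧ Nat.gcd d n = 1 ∧
        O.nu ((0 : ℂ) : OnePoint ℂ) = n ∧ O.nu ∞ = n ∧
        ∀ z : OnePoint ℂ, z ≠ ((0 : ℂ) : OnePoint ℂ) → z ≠ ∞ → O.nu z = 1) ∧
    (IsMinHolo ((RatFunc.X ^ d)⁻¹) O O ↔
      ∃ n : ℕ, 2 ≤ n ∧ Nat.gcd d n = 1 ∧
        O.nu ((0 : ℂ) : OnePoint ℂ) = n ∧ O.nu ∞ = n ∧
        ∀ z : OnePoint ℂ, z ≠ ((0 : ℂ) : OnePoint ℂ) → z ≠ ∞ → O.nu z = 1) := by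
  have hd1 : 1 ≤ d := by omega
  have hd0 : d ≠ 0 := by omega
  constructor
  · constructor
    · -- forward, z ↦ z^d
      intro h
      have hstep : ∀ w : ℂ, w ≠ 0 →
          O.nu ((w ^ d : ℂ) : OnePoint ℂ) = O.nu (w : OnePoint ℂ) := by
        intro w hw
        have hz := h (w : OnePoint ℂ)
        rw [evalOP_pow_coe, locDeg_pow_coe d hd1 w hw] at hz
        simpa using hz
      have haway : ∀ z : OnePoint ℂ, z ≠ ((0:ℂ) : OnePoint ℂ) → z ≠ ∞ → O.nu z = 1 := by
        intro z hz0 hzi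
        cases z with
        | infty => exact absurd rfl hzi
        | coe w =>
          have hw : w ≠ 0 := fun hww => hz0 (by rw [hww])
          exact away O d hd hstep w hw
      obtain ⟨h2, heq⟩ := good_conclude O hO hnt haway
      refine ⟨O.nu ((0:ℂ) : OnePoint ℂ), h2, ?_, rfl, heq.symm, haway⟩
      have h0 := h ((0:ℂ) : OnePoint ℂ)
      rw [evalOP_pow_coe, zero_pow hd0, locDeg_pow_zero d hd1] at h0
      exact gcd_one_aux _ _ (O.one_le _) h0
    · -- backward, z ↦ z^d
      rintro ⟨n, hn2, hgcd, h0, hinf, helse⟩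
      intro z
      cases z with
      | infty =>
        rw [evalOP_pow_infty d hd1, locDeg_pow_infty d hd1, hinf, hgcd, mul_one]
      | coe w =>
        by_cases hw : w = 0
        · subst hw
          rw [evalOP_pow_coe, zero_pow hd0, locDeg_pow_zero d hd1, h0, hgcd, mul_one]
        · rw [evalOP_pow_coe, locDeg_pow_coe d hd1 w hw]
          have e1 : O.nu ((w ^ d : ℂ) : OnePoint ℂ) = 1 :=
            helse _ (by rw [Ne, OnePoint.coe_eq_coe]; exact pow_ne_zero d hw)
              (OnePoint.coe_ne_infty _)
          have e2 : O.nu ((w : ℂ) : OnePoint ℂ) = 1 :=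
            helse _ (by rw [Ne, OnePoint.coe_eq_coe]; exact hw) (OnePoint.coe_ne_infty _)
          rw [e1, e2]
          simp
  · constructor
    · -- forward, z ↦ z^{-d}
      intro h
      have hstep : ∀ w : ℂ, w ≠ 0 →
          O.nu (((w ^ d)⁻¹ : ℂ) : OnePoint ℂ) = O.nu (w : OnePoint ℂ) := by
        intro w hw
        have hz := h (w : OnePoint ℂ)
        rw [evalOP_inv_coe d w hw, locDeg_inv_coe d hd1 w hw] at hz
        simpa using hz
      have hstep2 : ∀ w : ℂ, w ≠ 0 →
          O.nu ((w ^ (d * d) : ℂ) : OnePoint ℂ) = O.nu (w : OnePoint ℂ) := by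
        intro w hw
        have h1 := hstep w hw
        have hwd : ((w ^ d)⁻¹ : ℂ) ≠ 0 := inv_ne_zero (pow_ne_zero d hw)
        have h2 := hstep _ hwd
        have he : ((((w ^ d)⁻¹) ^ d)⁻¹ : ℂ) = w ^ (d * d) := by
          rw [← inv_pow, inv_inv, ← pow_mul]
        rw [he] at h2
        rw [h2, h1]
      have haway : ∀ z : OnePoint ℂ, z ≠ ((0:ℂ) : OnePoint ℂ) → z ≠ ∞ → O.nu z = 1 := by
        intro z hz0 hzi
        cases z with
        | infty => exact absurd rfl hzi
        | coe w =>
          have hw : w ≠ 0 := fun hww => hz0 (by rw [hww])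
          exact away O (d * d) (hd.trans (Nat.le_mul_of_pos_left d (by omega))) hstep2 w hw
      have h0 := h ((0:ℂ) : OnePoint ℂ)
      rw [evalOP_inv_zero d hd1, locDeg_inv_zero d hd1] at h0
      have hi := h ∞
      rw [evalOP_inv_infty d hd1, locDeg_inv_infty d hd1] at hi
      have ha : 1 ≤ O.nu ((0:ℂ) : OnePoint ℂ) := O.one_le _
      have key : O.nu ((0:ℂ) : OnePoint ℂ) * 1 =
          O.nu ((0:ℂ) : OnePoint ℂ) *
            (Nat.gcd d (O.nu ∞) * Nat.gcd d (O.nu ((0:ℂ) : OnePoint ℂ))) := by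
        rw [mul_one, ← mul_assoc, ← h0, ← hi]
      have hprod : Nat.gcd d (O.nu ∞) * Nat.gcd d (O.nu ((0:ℂ) : OnePoint ℂ)) = 1 :=
        (Nat.eq_of_mul_eq_mul_left ha key).symm
      have hg1 : Nat.gcd d (O.nu ∞) = 1 := Nat.eq_one_of_mul_eq_one_right hprod
      have hg2 : Nat.gcd d (O.nu ((0:ℂ) : OnePoint ℂ)) = 1 :=
        Nat.eq_one_of_mul_eq_one_left hprod
      have hab : O.nu ∞ = O.nu ((0:ℂ) : OnePoint ℂ) := by
        rw [h0, hg1, mul_one]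
      have h2 : 2 ≤ O.nu ((0:ℂ) : OnePoint ℂ) := by
        obtain ⟨zz, hzz⟩ := hnt
        cases zz with
        | infty => omega
        | coe w =>
          by_cases hww : w = 0
          · subst hww; omega
          · have := haway (w : OnePoint ℂ)
              (by rw [Ne, OnePoint.coe_eq_coe]; exact hww) (OnePoint.coe_ne_infty _)
            omega
      exact ⟨O.nu ((0:ℂ) : OnePoint ℂ), h2, hg2, rfl, hab, haway⟩
    · -- backward, z ↦ z^{-d}
      rintro ⟨n, hn2, hgcd, h0, hinf, helse⟩
      intro z
      cases z with
      | infty =>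
        rw [evalOP_inv_infty d hd1, locDeg_inv_infty d hd1, h0, hinf, hgcd, mul_one]
      | coe w =>
        by_cases hw : w = 0
        · subst hw
          rw [evalOP_inv_zero d hd1, locDeg_inv_zero d hd1, hinf, h0, hgcd, mul_one]
        · rw [evalOP_inv_coe d w hw, locDeg_inv_coe d hd1 w hw]
          have e1 : O.nu (((w ^ d)⁻¹ : ℂ) : OnePoint ℂ) = 1 :=
            helse _ (by rw [Ne, OnePoint.coe_eq_coe]; exact inv_ne_zero (pow_ne_zero d hw))
              (OnePoint.coe_ne_infty _)
          have e2 : O.nu ((w : ℂ) : OnePoint ℂ) = 1 :=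
            helse _ (by rw [Ne, OnePoint.coe_eq_coe]; exact hw) (OnePoint.coe_ne_infty _)
          rw [e1, e2]
          simp


end GenLattes
end
end
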